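/- Let f be a two-component equal-weight mixture (weights 1/2) and f̂ an estimated mixture such that TV(f(x|g_i), f̂(x|g_i)) ≤ ε for each component i. Then for each component i, E_{x∼f}[ |f(g_i|x) − f̂(g_i|x)| ] ≤ 3ε, where f(g_i|x) = (1/2)f(x|g_i)/f(x) and f̂(g_i|x) = (1/2)f̂(x|g_i)/f̂(x) are the posterior membership probabilities. -/
import Mathlib


open MeasureTheory

/-- Total variation distance between densities: `TV(p,q) = (1/2)∫|p−q|`. -/
noncomputable def tvDist {α : Type*} [MeasurableSpace α] (μ : Measure α)
    (p q : α → ℝ) : ℝ :=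
  (1 / 2) * ∫ x, |p x - q x| ∂μ

/-- For equal-weight two-component mixtures whose component densities are within
TV distance `ε`, the expected (under the true mixture) absolute error of the
estimated posterior membership probabilities is at most `3ε`, for each component. -/
theorem stmt_2 {α : Type*} [MeasurableSpace α] (μ : Measure α)
    (f g : Fin 2 → α → ℝ) (ε : ℝ)
    (hf : ∀ i x, 0 ≤ f i x) (hg : ∀ i x, 0 ≤ g i x)
    (hfi : ∀ i, Integrable (f i) μ) (hgi : ∀ i, Integrable (g i) μ)
    (hfn : ∀ i, ∫ x, f i x ∂μ = 1) (hgn : ∀ i, ∫ x, g i x ∂μ = 1)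
    -- mixture marginals
    (F G : α → ℝ)
    (hF : ∀ x, F x = (1 / 2) * f 0 x + (1 / 2) * f 1 x)
    (hG : ∀ x, G x = (1 / 2) * g 0 x + (1 / 2) * g 1 x)
    (hFpos : ∀ x, 0 < F x) (hGpos : ∀ x, 0 < G x)
    (hTV : ∀ i, tvDist μ (f i) (g i) ≤ ε) :
    ∀ i : Fin 2,
      ∫ x, |(1 / 2) * f i x / F x - (1 / 2) * g i x / G x| * F x ∂μ ≤ 3 * ε := by
  intro i
  -- integrability facts
  have hFG : Integrable (fun x => F x - G x) μ := by
    have hEq : (fun x => F x - G x)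
        = fun x => ((1/2) * f 0 x + (1/2) * f 1 x) - ((1/2) * g 0 x + (1/2) * g 1 x) :=
      funext fun x => by rw [hF, hG]
    rw [hEq]
    exact ((((hfi 0).const_mul _).add ((hfi 1).const_mul _)).sub
      (((hgi 0).const_mul _).add ((hgi 1).const_mul _)))
  have hInt : ∀ j, Integrable (fun x => |f j x - g j x|) μ :=
    fun j => ((hfi j).sub (hgi j)).abs
  have hh : Integrable (fun x => (1/2) * |f i x - g i x| + |F x - G x|) μ :=
    ((hInt i).const_mul _).add hFG.abs
  -- TV bounds
  have hTV' : ∀ j, ∫ x, |f j x - g j x| ∂μ ≤ 2 * ε := by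
    intro j
    have := hTV j
    unfold tvDist at this
    linarith
  -- pointwise bound
  have habs : ∀ x, |(1/2) * f i x / F x - (1/2) * g i x / G x| * F x
      ≤ (1/2) * |f i x - g i x| + |F x - G x| := by
    intro x
    have hFx := hFpos x
    have hGx := hGpos x
    have hgle : (1/2) * g i x ≤ G x := by
      rw [hG]
      fin_cases i <;> simp <;> nlinarith [hg 0 x, hg 1 x]
    have h1 : |(1/2) * f i x / F x - (1/2) * g i x / G x| * F x
        = |(1/2) * (f i x - g i x) + ((1/2) * g i x / G x) * (G x - F x)| := by
      have hrw : (1/2) * f i x / F x - (1/2) * g i x / G x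
          = ((1/2) * (f i x - g i x) + ((1/2) * g i x / G x) * (G x - F x)) / F x := by
        field_simp
        ring
      rw [hrw, abs_div, abs_of_pos hFx, div_mul_cancel₀ _ hFx.ne']
    rw [h1]
    have h2 : |((1/2) * g i x / G x) * (G x - F x)| ≤ |F x - G x| := by
      rw [abs_mul]
      have hc : |(1/2) * g i x / G x| ≤ 1 := by
        rw [abs_of_nonneg (div_nonneg (mul_nonneg (by norm_num) (hg i x)) hGx.le)]
        rw [div_le_one hGx]
        exact hgle
      calc |(1/2) * g i x / G x| * |G x - F x| ≤ 1 * |G x - F x| :=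
            mul_le_mul_of_nonneg_right hc (abs_nonneg _)
        _ = |F x - G x| := by rw [one_mul, abs_sub_comm]
    calc |(1/2) * (f i x - g i x) + ((1/2) * g i x / G x) * (G x - F x)|
        ≤ |(1/2) * (f i x - g i x)| + |((1/2) * g i x / G x) * (G x - F x)| := abs_add_le _ _
      _ ≤ (1/2) * |f i x - g i x| + |F x - G x| := by
          rw [abs_mul, abs_of_pos (by norm_num : (0:ℝ) < 1/2)]
          linarith [h2]
  -- main integral bound
  have hstep : ∫ x, |(1/2) * f i x / F x - (1/2) * g i x / G x| * F x ∂μ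
      ≤ ∫ x, ((1/2) * |f i x - g i x| + |F x - G x|) ∂μ := by
    apply integral_mono_of_nonneg
    · exact ae_of_all _ fun x => mul_nonneg (abs_nonneg _) (hFpos x).le
    · exact hh
    · exact ae_of_all _ habs
  have hsplit : ∫ x, ((1/2) * |f i x - g i x| + |F x - G x|) ∂μ
      = (1/2) * ∫ x, |f i x - g i x| ∂μ + ∫ x, |F x - G x| ∂μ := by
    rw [integral_add ((hInt i).const_mul _) hFG.abs, integral_const_mul]
  have hFGbound : ∫ x, |F x - G x| ∂μ
      ≤ ∫ x, ((1/2) * |f 0 x - g 0 x| + (1/2) * |f 1 x - g 1 x|) ∂μ := by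
    apply integral_mono hFG.abs (((hInt 0).const_mul _).add ((hInt 1).const_mul _))
    intro x
    simp only
    rw [hF, hG]
    have h01 : ((1/2) * f 0 x + (1/2) * f 1 x) - ((1/2) * g 0 x + (1/2) * g 1 x)
        = (1/2) * (f 0 x - g 0 x) + (1/2) * (f 1 x - g 1 x) := by ring
    rw [h01]
    calc |(1/2) * (f 0 x - g 0 x) + (1/2) * (f 1 x - g 1 x)|
        ≤ |(1/2) * (f 0 x - g 0 x)| + |(1/2) * (f 1 x - g 1 x)| := abs_add_le _ _
      _ = (1/2) * |f 0 x - g 0 x| + (1/2) * |f 1 x - g 1 x| := by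
          rw [abs_mul, abs_mul, abs_of_pos (by norm_num : (0:ℝ) < 1/2)]
  have hFGsplit : ∫ x, ((1/2) * |f 0 x - g 0 x| + (1/2) * |f 1 x - g 1 x|) ∂μ
      = (1/2) * ∫ x, |f 0 x - g 0 x| ∂μ + (1/2) * ∫ x, |f 1 x - g 1 x| ∂μ := by
    rw [integral_add ((hInt 0).const_mul _) ((hInt 1).const_mul _),
      integral_const_mul, integral_const_mul]
  have h0 := hTV' 0
  have h1 := hTV' 1
  have hi := hTV' i
  linarith
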